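/- Let n ≥ 1 be an integer, δ ∈ (0, n], q ∈ [1, ∞), r ∈ (0, q), C > 0 and A ≥ 0. Let g : ℝⁿ → ℝ satisfy λ · (ℋ^δ_∞({x ∈ ℝⁿ : |g(x)| > λ}))^{1/q} ≤ C · A for every λ > 0. Then for every subset E ⊆ ℝⁿ with ℋ^δ_∞(E) < ∞: (∫_E |g|^r dℋ^δ_∞)^{1/r} ≤ C · (q/(q − r))^{1/r} · ℋ^δ_∞(E)^{1/r − 1/q} · A. -/

import Mathlib

open scoped ENNReal
open Set MeasureTheory

noncomputable section

/-- An axis-parallel cube in `ℝⁿ`, described by its lower corner and positive side length. -/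
structure Cube (n : ℕ) where
  corner : Fin n → ℝ
  side : ℝ
  side_pos : 0 < side

namespace Cube

/-- The half-open cube `∏ᵢ [cornerᵢ, cornerᵢ + side)` as a set of points. -/
def toSet {n : ℕ} (Q : Cube n) : Set (Fin n → ℝ) :=
  {x | ∀ i, Q.corner i ≤ x i ∧ x i < Q.corner i + Q.side}

/-- A cube is dyadic if it has the form `2^k·(z + [0,1)ⁿ)` with `k ∈ ℤ`, `z ∈ ℤⁿ`. -/
def IsDyadic {n : ℕ} (Q : Cube n) : Prop :=
  ∃ (k : ℤ) (z : Fin n → ℤ), Q.side = (2:ℝ) ^ k ∧ ∀ i, Q.corner i = (z i : ℝ) * (2:ℝ) ^ k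

/-- `Q'` is a dyadic subcube of `Q`, i.e. obtained from `Q` by repeated bisection. -/
def IsDyadicSubcube {n : ℕ} (Q' Q : Cube n) : Prop :=
  ∃ (k : ℕ) (z : Fin n → ℕ), (∀ i, z i < 2 ^ k) ∧
    Q'.side = Q.side / 2 ^ k ∧ ∀ i, Q'.corner i = Q.corner i + (z i : ℝ) * (Q.side / 2 ^ k)

/-- The concentric dilate `t·Q` of a cube. -/
def dilate {n : ℕ} (Q : Cube n) (t : ℝ) (ht : 0 < t) : Cube n :=
  ⟨fun i => Q.corner i + Q.side / 2 - t * Q.side / 2, t * Q.side, mul_pos ht Q.side_pos⟩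

end Cube

/-- The Hausdorff content `ℋ^δ_∞`. -/
def hContent (n : ℕ) (δ : ℝ) (E : Set (Fin n → ℝ)) : ℝ≥0∞ :=
  ⨅ (Qs : ℕ → Cube n) (_ : E ⊆ ⋃ i, (Qs i).toSet), ∑' i, ENNReal.ofReal ((Qs i).side ^ δ)

/-- The dyadic Hausdorff content `~ℋ^δ_∞`. -/
def dContent (n : ℕ) (δ : ℝ) (E : Set (Fin n → ℝ)) : ℝ≥0∞ :=
  ⨅ (Qs : ℕ → Cube n) (_ : (∀ i, (Qs i).IsDyadic) ∧ E ⊆ ⋃ i, (Qs i).toSet),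
    ∑' i, ENNReal.ofReal ((Qs i).side ^ δ)

/-- The Choquet integral `∫_E f dℋ^δ_∞`. -/
def integH (n : ℕ) (δ : ℝ) (f : (Fin n → ℝ) → ℝ) (E : Set (Fin n → ℝ)) : ℝ≥0∞ :=
  ∫⁻ t in Ioi (0:ℝ), hContent n δ {x | x ∈ E ∧ t < f x}

/-- The Choquet integral `∫_E f d~ℋ^δ_∞` w.r.t. the dyadic Hausdorff content. -/
def integD (n : ℕ) (δ : ℝ) (f : (Fin n → ℝ) → ℝ) (E : Set (Fin n → ℝ)) : ℝ≥0∞ :=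
  ∫⁻ t in Ioi (0:ℝ), dContent n δ {x | x ∈ E ∧ t < f x}

/-- A property holds `ℋ^δ_∞`-a.e. -/
def AEContent (n : ℕ) (δ : ℝ) (P : (Fin n → ℝ) → Prop) : Prop :=
  hContent n δ {x | ¬ P x} = 0

/-- `ℋ^δ_∞`-quasicontinuity. -/
def QuasiCont (n : ℕ) (δ : ℝ) (f : (Fin n → ℝ) → ℝ) : Prop :=
  ∀ ε : ℝ, 0 < ε → ∃ O : Set (Fin n → ℝ),
    IsOpen O ∧ hContent n δ O < ENNReal.ofReal ε ∧ ContinuousOn f Oᶜ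

/-- `L¹_loc(ℝⁿ, ℋ^δ_∞)`. -/
def MemL1loc (n : ℕ) (δ : ℝ) (f : (Fin n → ℝ) → ℝ) : Prop :=
  QuasiCont n δ f ∧ ∀ K : Set (Fin n → ℝ), IsCompact K → integH n δ (fun x => |f x|) K < ⊤

/-- `L^∞(ℝⁿ, ℋ^δ_∞)`. -/
def MemLinf (n : ℕ) (δ : ℝ) (f : (Fin n → ℝ) → ℝ) : Prop :=
  QuasiCont n δ f ∧ ∃ M : ℝ, AEContent n δ (fun x => |f x| ≤ M)

/-- The `BMO(ℝⁿ, ℋ^δ_∞)` seminorm. -/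
def bmoNorm (n : ℕ) (δ : ℝ) (f : (Fin n → ℝ) → ℝ) : ℝ≥0∞ :=
  ⨆ Q : Cube n, ⨅ c : ℝ,
    integH n δ (fun x => |f x - c|) Q.toSet / hContent n δ Q.toSet

/-- Membership in `BMO(ℝⁿ, ℋ^δ_∞)`. -/
def MemBMO (n : ℕ) (δ : ℝ) (f : (Fin n → ℝ) → ℝ) : Prop :=
  MemL1loc n δ f ∧ bmoNorm n δ f < ⊤

/-- `essinf_{x ∈ Q} f := inf {t ∈ (0,∞) : ℋ^δ_∞({x ∈ Q : f x < t}) > 0}`. -/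
def essInfQ (n : ℕ) (δ : ℝ) (f : (Fin n → ℝ) → ℝ) (Q : Cube n) : ℝ :=
  sInf {t : ℝ | 0 < t ∧ 0 < hContent n δ {x | x ∈ Q.toSet ∧ f x < t}}

/-- The `BLO(ℝⁿ, ℋ^δ_∞)` seminorm. -/
def bloNorm (n : ℕ) (δ : ℝ) (f : (Fin n → ℝ) → ℝ) : ℝ≥0∞ :=
  ⨆ Q : Cube n,
    integH n δ (fun x => |f x - essInfQ n δ f Q|) Q.toSet / hContent n δ Q.toSet

/-- Membership in `BLO(ℝⁿ, ℋ^δ_∞)`. -/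
def MemBLO (n : ℕ) (δ : ℝ) (f : (Fin n → ℝ) → ℝ) : Prop :=
  MemL1loc n δ f ∧ bloNorm n δ f < ⊤

/-- A weight: locally Choquet-integrable, quasicontinuous, positive `ℋ^δ_∞`-a.e. -/
def IsWeight (n : ℕ) (δ : ℝ) (w : (Fin n → ℝ) → ℝ) : Prop :=
  MemL1loc n δ w ∧ AEContent n δ (fun x => 0 < w x)

/-- The capacitary Muckenhoupt `A_{p,δ}` constant, for `p > 1`. -/
def apConst (n : ℕ) (δ p : ℝ) (w : (Fin n → ℝ) → ℝ) : ℝ≥0∞ :=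
  ⨆ Q : Cube n,
    (integH n δ w Q.toSet / hContent n δ Q.toSet) *
      (integH n δ (fun x => w x ^ (-(1 / (p - 1)))) Q.toSet / hContent n δ Q.toSet) ^ (p - 1)

/-- Membership in `A_{p,δ}`, `p > 1`. -/
def MemAp (n : ℕ) (δ p : ℝ) (w : (Fin n → ℝ) → ℝ) : Prop :=
  IsWeight n δ w ∧ apConst n δ p w < ⊤

/-- The Hardy–Littlewood maximal operator w.r.t. `ℋ^δ_∞`. -/
def maxOp (n : ℕ) (δ : ℝ) (g : (Fin n → ℝ) → ℝ) (x : Fin n → ℝ) : ℝ≥0∞ :=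
  ⨆ (Q : Cube n) (_ : x ∈ Q.toSet),
    integH n δ (fun y => |g y|) Q.toSet / hContent n δ Q.toSet

/-- The capacitary `A_{1,δ}` constant. -/
def a1Const (n : ℕ) (δ : ℝ) (w : (Fin n → ℝ) → ℝ) : ℝ≥0∞ :=
  sInf {c : ℝ≥0∞ | 0 < c ∧
    AEContent n δ (fun x => maxOp n δ w x ≤ c * ENNReal.ofReal (w x))}

/-- Membership in `A_{1,δ}`. -/
def MemA1 (n : ℕ) (δ : ℝ) (w : (Fin n → ℝ) → ℝ) : Prop :=
  IsWeight n δ w ∧ a1Const n δ w < ⊤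

/-- The `A_{p,δ}` constant for `p ∈ [1,∞)` (it is the `A_{1,δ}` constant when `p = 1`). -/
def apConstGen (n : ℕ) (δ p : ℝ) (w : (Fin n → ℝ) → ℝ) : ℝ≥0∞ :=
  if p = 1 then a1Const n δ w else apConst n δ p w

/-- Membership in `A_{p,δ}` for `p ∈ [1,∞)` (meaning `A_{1,δ}` when `p = 1`). -/
def MemApGen (n : ℕ) (δ p : ℝ) (w : (Fin n → ℝ) → ℝ) : Prop :=
  IsWeight n δ w ∧ apConstGen n δ p w < ⊤

/-- The weighted `BMO^q_w(ℝⁿ, ℋ^δ_∞)` seminorm. -/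
def bmoWNorm (n : ℕ) (δ q : ℝ) (w f : (Fin n → ℝ) → ℝ) : ℝ≥0∞ :=
  ⨆ Q : Cube n, ⨅ c : ℝ,
    (integH n δ (fun x => |f x - c| ^ q * w x) Q.toSet / integH n δ w Q.toSet) ^ (1 / q)

/-- Membership in `BMO^q_w(ℝⁿ, ℋ^δ_∞)`. -/
def MemBMOw (n : ℕ) (δ q : ℝ) (w f : (Fin n → ℝ) → ℝ) : Prop :=
  QuasiCont n δ f ∧
    (∀ K : Set (Fin n → ℝ), IsCompact K → integH n δ (fun x => |f x| ^ q * w x) K < ⊤) ∧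
    bmoWNorm n δ q w f < ⊤

/-- The integral average `f_{Q,δ}` with respect to the dyadic Hausdorff content. -/
def avgQ (n : ℕ) (δ : ℝ) (f : (Fin n → ℝ) → ℝ) (Q : Cube n) : ℝ :=
  ((integD n δ f (Q.toSet ∩ {x | 0 ≤ f x})).toReal -
      (integD n δ (fun x => -f x) (Q.toSet ∩ {x | f x < 0})).toReal) /
    ((dContent n δ (Q.toSet ∩ {x | 0 ≤ f x})).toReal +
      (dContent n δ (Q.toSet ∩ {x | f x < 0})).toReal)

lemma hContent_mono' {n : ℕ} {δ : ℝ} {E F : Set (Fin n → ℝ)} (h : E ⊆ F) :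
    hContent n δ E ≤ hContent n δ F :=
  le_iInf₂ fun Qs hQs => iInf₂_le Qs (h.trans hQs)

/-- Kolmogorov-type inequality for the Hausdorff content. -/
theorem stmt18 (n : ℕ) (hn : 1 ≤ n) (δ : ℝ) (hδ0 : 0 < δ) (hδn : δ ≤ n)
    (q r C A : ℝ) (hq : 1 ≤ q) (hr0 : 0 < r) (hrq : r < q) (hC : 0 < C) (hA : 0 ≤ A)
    (g : (Fin n → ℝ) → ℝ)
    (hg : ∀ lam : ℝ, 0 < lam →
      ENNReal.ofReal lam * hContent n δ {x | lam < |g x|} ^ (1 / q) ≤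
        ENNReal.ofReal (C * A)) :
    ∀ E : Set (Fin n → ℝ), hContent n δ E < ⊤ →
      (integH n δ (fun x => |g x| ^ r) E) ^ (1 / r) ≤
        ENNReal.ofReal (C * (q / (q - r)) ^ (1 / r)) *
          hContent n δ E ^ (1 / r - 1 / q) * ENNReal.ofReal A := by
  intro E hE
  have hq0 : (0:ℝ) < q := lt_of_lt_of_le one_pos hq
  have hqr : (0:ℝ) < q - r := sub_pos.mpr hrq
  -- weak-type bound restated
  have key : ∀ lam : ℝ, 0 < lam →
      hContent n δ {x | lam < |g x|} ≤ ENNReal.ofReal ((C * A / lam) ^ q) := by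
    intro lam hlam
    have h2 : hContent n δ {x | lam < |g x|} ^ (1 / q) ≤
        ENNReal.ofReal (C * A) / ENNReal.ofReal lam := by
      rw [ENNReal.le_div_iff_mul_le (Or.inl (by simpa using hlam)) (Or.inl ENNReal.ofReal_ne_top),
        mul_comm]
      exact hg lam hlam
    calc hContent n δ {x | lam < |g x|}
        = (hContent n δ {x | lam < |g x|} ^ (1 / q)) ^ q := by
          rw [← ENNReal.rpow_mul, one_div, inv_mul_cancel₀ hq0.ne', ENNReal.rpow_one]
      _ ≤ (ENNReal.ofReal (C * A) / ENNReal.ofReal lam) ^ q :=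
          ENNReal.rpow_le_rpow h2 hq0.le
      _ = ENNReal.ofReal ((C * A / lam) ^ q) := by
          rw [← ENNReal.ofReal_div_of_pos hlam,
            ENNReal.ofReal_rpow_of_nonneg (div_nonneg (mul_nonneg hC.le hA) hlam.le) hq0.le]
  -- pointwise bound on the distribution function
  have hpt : ∀ t : ℝ, 0 < t →
      hContent n δ {x | x ∈ E ∧ t < |g x| ^ r} ≤
        min (hContent n δ E) (ENNReal.ofReal ((C * A) ^ q * t ^ (-(q / r)))) := by
    intro t ht
    refine le_min (hContent_mono' fun x hx => hx.1) ?_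
    have htr : (0:ℝ) < t ^ (1 / r) := Real.rpow_pos_of_pos ht _
    have hsub : {x | x ∈ E ∧ t < |g x| ^ r} ⊆ {x | t ^ (1 / r) < |g x|} := by
      intro x hx
      have h2 : t ^ (1 / r) < (|g x| ^ r) ^ (1 / r) :=
        Real.rpow_lt_rpow ht.le hx.2 (by positivity)
      rwa [← Real.rpow_mul (abs_nonneg _), mul_one_div, div_self hr0.ne',
        Real.rpow_one] at h2
    refine le_trans (hContent_mono' hsub) (le_trans (key _ htr) (le_of_eq ?_))
    congr 1
    rw [Real.div_rpow (mul_nonneg hC.le hA) htr.le, ← Real.rpow_mul ht.le,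
      Real.rpow_neg ht.le, div_eq_mul_inv]
    congr 2
    field_simp
  by_cases hdeg : A = 0 ∨ hContent n δ E = 0
  · have hz : integH n δ (fun x => |g x| ^ r) E = 0 := by
      refine le_antisymm ?_ zero_le
      have : ∫⁻ t in Ioi (0:ℝ), (0:ℝ≥0∞) = 0 := lintegral_zero
      rw [integH, ← this]
      refine setLIntegral_mono' measurableSet_Ioi fun t ht => ?_
      rcases hdeg with hA0 | hE0
      · refine le_trans (le_trans (hpt t ht) (min_le_right _ _)) (le_of_eq ?_)
        rw [hA0, mul_zero, Real.zero_rpow hq0.ne', zero_mul, ENNReal.ofReal_zero]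
      · exact le_trans (le_trans (hpt t ht) (min_le_left _ _)) hE0.le
    rw [hz, ENNReal.zero_rpow_of_pos (by positivity)]
    exact zero_le
  push_neg at hdeg
  obtain ⟨hA0, hE0⟩ := hdeg
  have hA' : 0 < A := lt_of_le_of_ne hA (Ne.symm hA0)
  set ca := C * A with hca_def
  have hca : 0 < ca := mul_pos hC hA'
  set h := (hContent n δ E).toReal with hh_def
  have hh : 0 < h := ENNReal.toReal_pos hE0 hE.ne
  have hEeq : hContent n δ E = ENNReal.ofReal h := (ENNReal.ofReal_toReal hE.ne).symm
  set t₀ := ca ^ r * h ^ (-(r / q)) with ht₀_def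
  have ht₀ : 0 < t₀ := mul_pos (Real.rpow_pos_of_pos hca _) (Real.rpow_pos_of_pos hh _)
  have ha : -(q / r) < -1 := by
    rw [neg_lt_neg_iff, lt_div_iff₀ hr0]; linarith
  -- split the integral
  have hsplit : integH n δ (fun x => |g x| ^ r) E ≤
      (∫⁻ _ in Ioc (0:ℝ) t₀, hContent n δ E) +
        ∫⁻ t in Ioi t₀, ENNReal.ofReal (ca ^ q * t ^ (-(q / r))) := by
    rw [integH, show Ioi (0:ℝ) = Ioc 0 t₀ ∪ Ioi t₀ from (Ioc_union_Ioi_eq_Ioi ht₀.le).symm]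
    refine le_trans (lintegral_union_le _ _ _) (add_le_add ?_ ?_)
    · exact setLIntegral_mono' measurableSet_Ioc fun t ht =>
        le_trans (hpt t ht.1) (min_le_left _ _)
    · exact setLIntegral_mono' measurableSet_Ioi fun t ht =>
        le_trans (hpt t (ht₀.trans ht)) (min_le_right _ _)
  have hpiece1 : (∫⁻ _ in Ioc (0:ℝ) t₀, hContent n δ E) = ENNReal.ofReal (h * t₀) := by
    rw [setLIntegral_const, hEeq, Real.volume_Ioc, sub_zero,
      ← ENNReal.ofReal_mul hh.le]
  have hpiece2 : (∫⁻ t in Ioi t₀, ENNReal.ofReal (ca ^ q * t ^ (-(q / r)))) =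
      ENNReal.ofReal (ca ^ q * (-t₀ ^ (-(q / r) + 1) / (-(q / r) + 1))) := by
    have hInt : IntegrableOn (fun t : ℝ => t ^ (-(q / r))) (Ioi t₀) :=
      integrableOn_Ioi_rpow_of_lt ha ht₀
    have hnn : 0 ≤ᵐ[volume.restrict (Ioi t₀)] fun t : ℝ => t ^ (-(q / r)) :=
      ae_restrict_of_forall_mem measurableSet_Ioi fun t ht =>
        Real.rpow_nonneg (le_of_lt (ht₀.trans ht)) _
    have heq := ofReal_integral_eq_lintegral_ofReal hInt hnn
    calc (∫⁻ t in Ioi t₀, ENNReal.ofReal (ca ^ q * t ^ (-(q / r))))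
        = ∫⁻ t in Ioi t₀, ENNReal.ofReal (ca ^ q) * ENNReal.ofReal (t ^ (-(q / r))) := by
          refine setLIntegral_congr_fun measurableSet_Ioi (fun t ht => ?_)
          rw [← ENNReal.ofReal_mul (by positivity)]
      _ = ENNReal.ofReal (ca ^ q) * ∫⁻ t in Ioi t₀, ENNReal.ofReal (t ^ (-(q / r))) :=
          lintegral_const_mul' _ _ ENNReal.ofReal_ne_top
      _ = ENNReal.ofReal (ca ^ q) * ENNReal.ofReal (-t₀ ^ (-(q / r) + 1) / (-(q / r) + 1)) := by
          rw [← heq, integral_Ioi_rpow_of_lt ha ht₀]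
      _ = ENNReal.ofReal (ca ^ q * (-t₀ ^ (-(q / r) + 1) / (-(q / r) + 1))) := by
          rw [← ENNReal.ofReal_mul (by positivity)]
  -- real-number algebra
  have e1 : t₀ ^ (-(q / r) + 1) = ca ^ (r - q) * h ^ (1 - r / q) := by
    rw [ht₀_def, Real.mul_rpow (Real.rpow_nonneg hca.le _) (Real.rpow_nonneg hh.le _),
      ← Real.rpow_mul hca.le, ← Real.rpow_mul hh.le]
    congr 2
    · field_simp; ring
    · field_simp; ring
  have e2 : h * t₀ = ca ^ r * h ^ (1 - r / q) := by
    rw [ht₀_def, ← mul_assoc, mul_comm h, mul_assoc]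
    congr 1
    nth_rw 1 [← Real.rpow_one h]
    rw [← Real.rpow_add hh, ← sub_eq_add_neg]
  have hrq' : r - q ≠ 0 := sub_ne_zero.mpr hrq.ne
  have esum : h * t₀ + ca ^ q * (-t₀ ^ (-(q / r) + 1) / (-(q / r) + 1)) =
      q / (q - r) * (ca ^ r * h ^ (1 - r / q)) := by
    have hq2 : ca ^ q * ca ^ (r - q) = ca ^ r := by
      rw [← Real.rpow_add hca]; congr 1; ring
    rw [e1, e2, show -(q / r) + 1 = (r - q) / r from by field_simp; ring,
      show ca ^ q * (-(ca ^ (r - q) * h ^ (1 - r / q)) / ((r - q) / r)) =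
        ca ^ q * ca ^ (r - q) * h ^ (1 - r / q) * (r / (q - r)) from by
          field_simp
          ring,
      hq2]
    field_simp
    ring
  -- conclude
  have hfinal : integH n δ (fun x => |g x| ^ r) E ≤
      ENNReal.ofReal (q / (q - r) * (ca ^ r * h ^ (1 - r / q))) := by
    have hx : -(q / r) + 1 < 0 := by linarith
    have hterm : 0 ≤ ca ^ q * (-t₀ ^ (-(q / r) + 1) / (-(q / r) + 1)) :=
      mul_nonneg (by positivity)
        (div_nonneg_of_nonpos (neg_nonpos.mpr (Real.rpow_nonneg ht₀.le _)) hx.le)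
    rw [← esum, ENNReal.ofReal_add (by positivity) hterm]
    exact hsplit.trans (le_of_eq (by rw [hpiece1, hpiece2]))
  refine le_trans (ENNReal.rpow_le_rpow hfinal (by positivity)) (le_of_eq ?_)
  rw [ENNReal.ofReal_rpow_of_nonneg (by positivity) (by positivity)]
  have ereal : (q / (q - r) * (ca ^ r * h ^ (1 - r / q))) ^ (1 / r) =
      (q / (q - r)) ^ (1 / r) * ca * h ^ (1 / r - 1 / q) := by
    rw [Real.mul_rpow (by positivity) (by positivity),
      Real.mul_rpow (by positivity) (by positivity),
      ← Real.rpow_mul hca.le, ← Real.rpow_mul hh.le,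
      show r * (1 / r) = 1 from by field_simp, Real.rpow_one,
      show (1 - r / q) * (1 / r) = 1 / r - 1 / q from by field_simp]
    ring
  rw [ereal, hEeq, ENNReal.ofReal_rpow_of_pos hh,
    ← ENNReal.ofReal_mul (by positivity), ← ENNReal.ofReal_mul (by positivity)]
  congr 1
  rw [hca_def]
  ring
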